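/- Suppose that the kernel G'[ψ'] is finite and that the quotient G/η(G) is finite. Then the quotients G'/ψ(G) and G/ψ'(G') are finite, and Nat.card (G'/ψ(G)) · Nat.card (G/ψ'(G')) = Nat.card (G'[ψ']/ψ(G[η])) · Nat.card (G/η(G)). -/

import Mathlib

theorem card_quotients_of_isogeny {G G' : Type*} [AddCommGroup G] [AddCommGroup G']
    (ψ : G →+ G') (ψ' : G' →+ G)
    (hker : Finite ψ'.ker)
    (hfin : Finite (G ⧸ (ψ'.comp ψ).range)) :
    Finite (G' ⧸ ψ.range) ∧ Finite (G ⧸ ψ'.range) ∧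
      Nat.card (G' ⧸ ψ.range) * Nat.card (G ⧸ ψ'.range) =
        Nat.card (ψ'.ker ⧸
            ((AddSubgroup.map ψ (AddMonoidHom.ker (ψ'.comp ψ))).addSubgroupOf ψ'.ker)) *
          Nat.card (G ⧸ (ψ'.comp ψ).range) := by
  set A : AddSubgroup G' := ψ.range
  set K : AddSubgroup G' := ψ'.ker
  set B : AddSubgroup G := ψ'.range
  set R : AddSubgroup G := (ψ'.comp ψ).range
  -- map ψ (ker η) = A ⊓ K
  have hmap : AddSubgroup.map ψ (AddMonoidHom.ker (ψ'.comp ψ)) = A ⊓ K := by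
    ext x
    simp only [AddSubgroup.mem_map, AddMonoidHom.mem_ker, AddMonoidHom.coe_comp,
      Function.comp_apply, AddSubgroup.mem_inf]
    constructor
    · rintro ⟨g, hg, rfl⟩
      exact ⟨⟨g, rfl⟩, hg⟩
    · rintro ⟨⟨g, rfl⟩, hk⟩
      exact ⟨g, hk, rfl⟩
  -- R = map ψ' A
  have hR : R = AddSubgroup.map ψ' A := by
    ext x
    simp only [AddSubgroup.mem_map, AddMonoidHom.mem_range, AddMonoidHom.coe_comp,
      Function.comp_apply]
    constructor
    · rintro ⟨g, rfl⟩; exact ⟨ψ g, ⟨g, rfl⟩, rfl⟩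
    · rintro ⟨y, ⟨g, rfl⟩, rfl⟩; exact ⟨g, rfl⟩
  have hcard1 : Nat.card (ψ'.ker ⧸
      ((AddSubgroup.map ψ (AddMonoidHom.ker (ψ'.comp ψ))).addSubgroupOf ψ'.ker)) =
      A.relIndex K := by
    rw [hmap]
    exact (AddSubgroup.inf_relIndex_right A K).symm ▸ rfl
  -- index identities
  have hRidx : R.index = (A ⊔ K).index * B.index := by
    rw [hR, AddSubgroup.index_map]
  have hAidx : A.relIndex K * (A ⊔ K).index = A.index := by
    rw [← AddSubgroup.relIndex_sup_left]
    exact AddSubgroup.relIndex_mul_index le_sup_left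
  have key : A.index * B.index = A.relIndex K * R.index := by
    rw [hRidx, ← mul_assoc, hAidx]
  -- nonvanishing
  have hRne : R.index ≠ 0 := AddSubgroup.index_ne_zero_of_finite
  have hrelne : A.relIndex K ≠ 0 := by
    have : Finite (K ⧸ A.addSubgroupOf K) := Quotient.finite _
    exact AddSubgroup.index_ne_zero_of_finite
  have hAne : A.index ≠ 0 := by
    intro h
    have := key
    rw [h, zero_mul] at this
    exact (mul_ne_zero hrelne hRne) this.symm
  have hBne : B.index ≠ 0 := by
    intro h
    have := key
    rw [h, mul_zero] at this
    exact (mul_ne_zero hrelne hRne) this.symm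
  have fA : Finite (G' ⧸ A) :=
    @AddSubgroup.finite_quotient_of_finiteIndex _ _ A ⟨hAne⟩
  have fB : Finite (G ⧸ B) :=
    @AddSubgroup.finite_quotient_of_finiteIndex _ _ B ⟨hBne⟩
  exact ⟨fA, fB, by rw [hcard1]; exact key⟩
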